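/- arXiv:1112.0749 — 3 statements merged into one kernel-verified Lean document; each statement's English description precedes it below -/
import Mathlib

section
/- Let U ⊆ ℚ^n be such that for every choice of signs σ₁,…,σ_n ∈ {−1,1} there exists u = (u₁,…,u_n) ∈ U with sgn(u_j) = σ_j for each j (in particular u_j ≠ 0). Then 0 lies in the rational convex hull of U. -/
lemma stmt10_aux (n : ℕ) (s : Finset (Fin n)) : ∀ U : Set (Fin n → ℚ),
    (∀ σ : Fin n → ℚ, (∀ j, σ j = 1 ∨ σ j = -1) →
      ∃ u ∈ U, (∀ j ∈ s, 0 < σ j * u j) ∧ ∀ j ∉ s, u j = 0) →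
    (0 : Fin n → ℚ) ∈ convexHull ℚ U := by
  classical
  induction s using Finset.induction_on with
  | empty =>
    intro U h
    obtain ⟨u, hu, _, hz⟩ := h (fun _ => 1) (fun _ => Or.inl rfl)
    have hu0 : u = 0 := funext fun j => hz j (Finset.notMem_empty j)
    exact subset_convexHull ℚ U (hu0 ▸ hu)
  | @insert i s hi IH =>
    intro U h
    have key : (0 : Fin n → ℚ) ∈ convexHull ℚ (convexHull ℚ U) := by
      apply IH
      intro σ hσ
      have hσp : ∀ j, (Function.update σ i 1) j = 1 ∨ (Function.update σ i 1) j = -1 := by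
        intro j
        rcases eq_or_ne j i with rfl | hj
        · simp
        · simpa [Function.update_of_ne hj] using hσ j
      have hσm : ∀ j, (Function.update σ i (-1)) j = 1 ∨ (Function.update σ i (-1)) j = -1 := by
        intro j
        rcases eq_or_ne j i with rfl | hj
        · simp
        · simpa [Function.update_of_ne hj] using hσ j
      obtain ⟨u, huU, hus, huz⟩ := h (Function.update σ i 1) hσp
      obtain ⟨u', hu'U, hu's, hu'z⟩ := h (Function.update σ i (-1)) hσm
      have hpi : 0 < u i := by
        have := hus i (Finset.mem_insert_self i s)
        simpa using this
      have hni : u' i < 0 := by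
        have := hu's i (Finset.mem_insert_self i s)
        simp at this
        linarith
      set d : ℚ := u i - u' i with hd
      have hd0 : 0 < d := by simp [hd]; linarith
      set a : ℚ := (-u' i) / d with ha'
      set b : ℚ := (u i) / d with hb'
      have ha : 0 < a := div_pos (by linarith) hd0
      have hb : 0 < b := div_pos hpi hd0
      have hab : a + b = 1 := by
        rw [ha', hb', ← add_div, div_eq_one_iff_eq hd0.ne', hd]
        ring
      refine ⟨a • u + b • u', ?_, ?_, ?_⟩
      · exact (convex_convexHull ℚ U) (subset_convexHull ℚ U huU)
          (subset_convexHull ℚ U hu'U) ha.le hb.le hab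
      · intro j hj
        have hji : j ≠ i := fun e => hi (e ▸ hj)
        have h1 : 0 < σ j * u j := by
          have := hus j (Finset.mem_insert_of_mem hj)
          rwa [Function.update_of_ne hji] at this
        have h2 : 0 < σ j * u' j := by
          have := hu's j (Finset.mem_insert_of_mem hj)
          rwa [Function.update_of_ne hji] at this
        have : (a • u + b • u') j = a * u j + b * u' j := by
          simp [Pi.add_apply, smul_eq_mul]
        rw [this]
        have : σ j * (a * u j + b * u' j) = a * (σ j * u j) + b * (σ j * u' j) := by ring
        rw [this]
        exact add_pos (mul_pos ha h1) (mul_pos hb h2)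
      · intro j hj
        rcases eq_or_ne j i with rfl | hji
        · have : (a • u + b • u') j = a * u j + b * u' j := by
            simp [Pi.add_apply, smul_eq_mul]
          rw [this, ha', hb']
          field_simp
          ring
        · have hjs : j ∉ insert i s := by
            simp [hji]
            intro h'; exact hj h'
          have h1 := huz j hjs
          have h2 := hu'z j hjs
          simp [Pi.add_apply, smul_eq_mul, h1, h2]
    rwa [(convex_convexHull ℚ U).convexHull_eq] at key

theorem stmt10
    (n : ℕ) (U : Set (Fin n → ℚ))
    (h : ∀ σ : Fin n → ℚ, (∀ j, σ j = 1 ∨ σ j = -1) →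
      ∃ u ∈ U, ∀ j : Fin n, 0 < σ j * u j) :
    (0 : Fin n → ℚ) ∈ convexHull ℚ U := by
  apply stmt10_aux n Finset.univ
  intro σ hσ
  obtain ⟨u, hu, hs⟩ := h σ hσ
  exact ⟨u, hu, fun j _ => hs j, fun j hj => absurd (Finset.mem_univ j) hj⟩
end

section
/- Let Λ ⊆ [0,∞) be an additive semigroup with 0 ∈ Λ, let ψ : Λ → ℂ be a bounded character of Λ, and let Γ ⊆ Λ be a finite subset. Set Γ₀ = {γ ∈ Γ : ψ(γ) = 0} and Γ' = {γ ∈ Γ : ψ(γ) ≠ 0}, and let V' = Span_ℚ(Γ'). Then conv_ℚ(Γ₀) ∩ V' = ∅, i.e. no rational convex combination of elements of Γ₀ lies in the rational span of Γ'. -/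
theorem stmt11
    (Λ : Set ℝ) (hΛpos : ∀ x ∈ Λ, 0 ≤ x) (hΛ0 : (0:ℝ) ∈ Λ)
    (hΛadd : ∀ x ∈ Λ, ∀ y ∈ Λ, x + y ∈ Λ)
    (ψ : ℝ → ℂ) (hψ0 : ψ 0 = 1)
    (hψmul : ∀ x ∈ Λ, ∀ y ∈ Λ, ψ (x + y) = ψ x * ψ y)
    (hψbd : ∃ C : ℝ, ∀ x ∈ Λ, ‖ψ x‖ ≤ C)
    (Γ : Finset ℝ) (hΓ : (Γ : Set ℝ) ⊆ Λ) :
    convexHull ℚ {γ : ℝ | γ ∈ Γ ∧ ψ γ = 0} ∩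
      (Submodule.span ℚ {γ : ℝ | γ ∈ Γ ∧ ψ γ ≠ 0} : Set ℝ) = ∅ := by
  classical
  rw [Set.eq_empty_iff_forall_notMem]
  rintro x ⟨hx1, hx2⟩
  -- ψ on natural multiples
  have key1 : ∀ (n : ℕ) (y : ℝ), y ∈ Λ → ((n • y) ∈ Λ ∧ ψ (n • y) = ψ y ^ n) := by
    intro n
    induction n with
    | zero => intro y _; simpa [hψ0] using hΛ0
    | succ n ih =>
      intro y hy
      obtain ⟨h1, h2⟩ := ih y hy
      have hm : (n + 1) • y = n • y + y := succ_nsmul y n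
      refine ⟨by rw [hm]; exact hΛadd _ h1 _ hy, ?_⟩
      rw [hm, hψmul _ h1 _ hy, h2, pow_succ]
  -- ψ on ℕ-combinations
  have key2 : ∀ {ι : Type} (s : Finset ι) (a : ι → ℕ) (g : ι → ℝ),
      (∀ i ∈ s, g i ∈ Λ) →
      ((∑ i ∈ s, a i • g i) ∈ Λ ∧
        ψ (∑ i ∈ s, a i • g i) = ∏ i ∈ s, ψ (g i) ^ a i) := by
    intro ι s
    induction s using Finset.cons_induction with
    | empty => intro a g _; simpa [hψ0] using hΛ0
    | cons i s his ih =>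
      intro a g hg
      obtain ⟨h1, h2⟩ := ih a g (fun j hj => hg j (Finset.mem_cons_of_mem hj))
      obtain ⟨h3, h4⟩ := key1 (a i) (g i) (hg i (Finset.mem_cons_self i s))
      rw [Finset.sum_cons, Finset.prod_cons]
      exact ⟨hΛadd _ h3 _ h1, by rw [hψmul _ h3 _ h1, h4, h2]⟩
  rw [convexHull_eq] at hx1
  obtain ⟨ι, t, w, z, hw0, hw1, hz, hxc⟩ := hx1
  rw [Finset.centerMass_eq_of_sum_1 _ _ hw1] at hxc
  rw [SetLike.mem_coe, Submodule.mem_span_set'] at hx2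
  obtain ⟨n, f, g, hxs⟩ := hx2
  set v : Fin n → ℝ := fun j => (g j : ℝ) with hv
  have hvmem : ∀ j, v j ∈ Γ ∧ ψ (v j) ≠ 0 := fun j => (g j).2
  -- common denominator
  set d : ℕ := (∏ i ∈ t, (w i).den) * ∏ j, (f j).den with hd
  have hdpos : 0 < d := by
    exact Nat.mul_pos (Finset.prod_pos fun i _ => (w i).pos)
      (Finset.prod_pos fun j _ => (f j).pos)
  have intlem : ∀ q : ℚ, q.den ∣ d → ∃ A : ℤ, (A : ℚ) = (d : ℚ) * q := by
    rintro q ⟨k, hk⟩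
    refine ⟨q.num * k, ?_⟩
    have h1 : (q.num : ℚ) = q * (q.den : ℚ) := (Rat.mul_den_eq_num q).symm
    push_cast
    rw [h1, hk]
    push_cast
    ring
  have hAex : ∀ i : ι, ∃ A : ℤ, i ∈ t → ((A : ℚ) = (d : ℚ) * w i ∧ 0 ≤ A) := by
    intro i
    by_cases hi : i ∈ t
    · obtain ⟨A, hA⟩ := intlem (w i)
        (dvd_mul_of_dvd_left (Finset.dvd_prod_of_mem _ hi) _)
      refine ⟨A, fun _ => ⟨hA, ?_⟩⟩
      have : (0 : ℚ) ≤ (A : ℚ) := by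
        rw [hA]
        exact mul_nonneg (by positivity) (hw0 i hi)
      exact_mod_cast this
    · exact ⟨0, fun h => absurd h hi⟩
  choose A hA using hAex
  have hBex : ∀ j : Fin n, ∃ B : ℤ, (B : ℚ) = (d : ℚ) * f j := fun j =>
    intlem (f j) (dvd_mul_of_dvd_right (Finset.dvd_prod_of_mem _ (Finset.mem_univ j)) _)
  choose B hB using hBex
  -- the scaled real equation
  have hsmul : ∀ (q : ℚ) (r : ℝ), q • r = (q : ℝ) * r := fun q r => Rat.smul_def q r
  have hAx : ∑ i ∈ t, (A i : ℝ) * z i = (d : ℝ) * x := by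
    rw [← hxc, Finset.mul_sum]
    refine Finset.sum_congr rfl fun i hi => ?_
    have := (hA i hi).1
    have hcast : (A i : ℝ) = (d : ℝ) * (w i : ℝ) := by exact_mod_cast this
    rw [hcast, hsmul]
    ring
  have hBx : ∑ j, (B j : ℝ) * v j = (d : ℝ) * x := by
    rw [← hxs, Finset.mul_sum]
    refine Finset.sum_congr rfl fun j _ => ?_
    have hcast : (B j : ℝ) = (d : ℝ) * (f j : ℝ) := by exact_mod_cast hB j
    rw [hcast, hsmul]
    ring
  set a : ι → ℕ := fun i => (A i).toNat with ha
  set bp : Fin n → ℕ := fun j => (B j).toNat with hbp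
  set bm : Fin n → ℕ := fun j => (-(B j)).toNat with hbm
  have hacast : ∀ i ∈ t, ((a i : ℝ)) = (A i : ℝ) := by
    intro i hi
    have h2 := (hA i hi).2
    simp only [ha]
    exact_mod_cast Int.toNat_of_nonneg h2
  have hbcast : ∀ j, ((bp j : ℝ)) - ((bm j : ℝ)) = (B j : ℝ) := by
    intro j
    have : ((bp j : ℤ)) - ((bm j : ℤ)) = B j := by
      simp only [hbp, hbm]
      omega
    exact_mod_cast this
  -- key natural-coefficient equation
  have hEq : (∑ i ∈ t, a i • z i) + (∑ j, bm j • v j) = ∑ j, bp j • v j := by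
    have e1 : ∑ i ∈ t, a i • z i = ∑ i ∈ t, (A i : ℝ) * z i := by
      refine Finset.sum_congr rfl fun i hi => ?_
      rw [nsmul_eq_mul, hacast i hi]
    have e2 : (∑ j, bp j • v j) - (∑ j, bm j • v j) = ∑ j, (B j : ℝ) * v j := by
      rw [← Finset.sum_sub_distrib]
      refine Finset.sum_congr rfl fun j _ => ?_
      rw [nsmul_eq_mul, nsmul_eq_mul, ← sub_mul, hbcast j]
    have := hAx.trans hBx.symm
    rw [e1, this, ← e2]
    ring
  -- memberships in Λ
  have hzΛ : ∀ i ∈ t, z i ∈ Λ := fun i hi => hΓ (hz i hi).1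
  have hvΛ : ∀ j : Fin n, v j ∈ Λ := fun j => hΓ (hvmem j).1
  obtain ⟨hS, hψS⟩ := key2 t a z hzΛ
  obtain ⟨hT, hψT⟩ := key2 Finset.univ bm v (fun j _ => hvΛ j)
  obtain ⟨hU, hψU⟩ := key2 Finset.univ bp v (fun j _ => hvΛ j)
  -- LHS has ψ = 0
  have hsumA : ∑ i ∈ t, (A i : ℚ) = (d : ℚ) := by
    rw [show (∑ i ∈ t, (A i : ℚ)) = ∑ i ∈ t, (d : ℚ) * w i from
      Finset.sum_congr rfl fun i hi => (hA i hi).1, ← Finset.mul_sum, hw1, mul_one]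
  have hex : ∃ i ∈ t, a i ≠ 0 := by
    by_contra h
    push_neg at h
    have : ∀ i ∈ t, (A i : ℚ) = 0 := by
      intro i hi
      have h1 := (hA i hi).2
      have h2 := h i hi
      simp only [ha] at h2
      have : A i = 0 := by omega
      simp [this]
    rw [Finset.sum_congr rfl this, Finset.sum_const, smul_zero] at hsumA
    have : (d : ℚ) ≠ 0 := by positivity
    exact this hsumA.symm
  obtain ⟨i0, hi0, hai0⟩ := hex
  have hψSzero : ψ (∑ i ∈ t, a i • z i) = 0 := by
    rw [hψS]
    exact Finset.prod_eq_zero hi0 (by rw [(hz i0 hi0).2, zero_pow hai0])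
  have hL : ψ ((∑ i ∈ t, a i • z i) + (∑ j, bm j • v j)) = 0 := by
    rw [hψmul _ hS _ hT, hψSzero, zero_mul]
  have hR : ψ (∑ j, bp j • v j) ≠ 0 := by
    rw [hψU]
    exact Finset.prod_ne_zero_iff.mpr fun j _ => pow_ne_zero _ (hvmem j).2
  rw [hEq] at hL
  exact hR hL
end

section
/- Let P be the set of prime elements of a free multiplicative commutative monoid N ⊆ [1,∞) (so every n ∈ N factors uniquely as a product of elements of P), and let ω be an admissible weight on N. Let G_ω be the set of multiplicative functions a : N → ℂ (a(1)=1, a(mn)=a(m)a(n) for coprime m,n) with Σ_{p∈P} |a(p)|²ω(p)² < ∞ and Σ_{p∈P, k≥2} |a(p^k)|ω(p^k) < ∞. Then G_ω is closed under Dirichlet convolution: if a,b ∈ G_ω then a*b ∈ G_ω, where (a*b)(n) = Σ_{ℓm=n} a(ℓ)b(m). -/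
open Filter Finsupp

/-- Multiplicativity for functions on the free commutative monoid `P →₀ ℕ`
(exponent vectors): value 1 at the identity, and multiplicative on coprime
(= disjointly supported) elements. -/
def IsMultiplicativeOn {P : Type*} (a : (P →₀ ℕ) → ℂ) : Prop :=
  a 0 = 1 ∧ ∀ m n : P →₀ ℕ, Disjoint m.support n.support → a (m + n) = a m * a n

/-- Membership in the class `G_ω`. -/
def MemG {P : Type*} (ω : (P →₀ ℕ) → ℝ) (a : (P →₀ ℕ) → ℂ) : Prop :=
  IsMultiplicativeOn a ∧
  Summable (fun p : P =>
    ‖a (Finsupp.single p 1)‖ ^ 2 * (ω (Finsupp.single p 1)) ^ 2) ∧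
  Summable (fun q : P × {k : ℕ // 2 ≤ k} =>
    ‖a (Finsupp.single q.1 (q.2 : ℕ))‖ * ω (Finsupp.single q.1 (q.2 : ℕ)))

open ENNReal

section auxmult
set_option linter.unusedSectionVars false
variable {P : Type*} [DecidableEq P]

private lemma split_add_rest (s : Finset P) (x : P →₀ ℕ) :
    x.filter (· ∈ s) + x.filter (· ∉ s) = x := by
  ext p
  rw [Finsupp.add_apply, Finsupp.filter_apply, Finsupp.filter_apply]
  by_cases h : p ∈ s <;> simp [h]

private lemma disj_filter (s : Finset P) (x y : P →₀ ℕ) :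
    Disjoint (x.filter (· ∈ s)).support (y.filter (· ∉ s)).support := by
  rw [Finset.disjoint_left]
  intro p hp hq
  rw [Finsupp.support_filter, Finset.mem_filter] at hp hq
  exact hq.2 hp.2

private lemma filter_decomp (s : Finset P) (u v : P →₀ ℕ)
    (hu : u.support ⊆ s) (hv : ∀ p ∈ s, v p = 0) :
    (u + v).filter (· ∈ s) = u ∧ (u + v).filter (· ∉ s) = v := by
  have hu' : ∀ p ∉ s, u p = 0 := fun p hp =>
    Finsupp.notMem_support_iff.mp (fun h => hp (hu h))
  constructor <;> ext p <;> rw [Finsupp.filter_apply] <;> by_cases h : p ∈ s <;>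
    simp only [h, if_true, if_false, if_neg, not_true, not_false_iff, Finsupp.add_apply]
  · rw [hv p h, add_zero]
  · exact (hu' p h).symm
  · exact (hv p h).symm
  · rw [hu' p h, zero_add]

private lemma conv_mult (a b : (P →₀ ℕ) → ℂ) (hA : IsMultiplicativeOn a)
    (hB : IsMultiplicativeOn b) :
    IsMultiplicativeOn (fun n => ∑ p ∈ Finset.HasAntidiagonal.antidiagonal n, a p.1 * b p.2) := by
  constructor
  · simp [hA.1, hB.1]
  · intro m n hmn
    have hsupp : ∀ t x y : P →₀ ℕ, x + y = t → x.support ⊆ t.support := by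
      intro t x y hxy
      exact Finsupp.support_mono (hxy ▸ self_le_add_right x y)
    have hsupp' : ∀ t x y : P →₀ ℕ, x + y = t → y.support ⊆ t.support := by
      intro t x y hxy
      exact Finsupp.support_mono (hxy ▸ self_le_add_left y x)
    have hzero : ∀ z : P →₀ ℕ, z.support ⊆ n.support → ∀ p ∈ m.support, z p = 0 := by
      intro z hz p hp
      exact Finsupp.notMem_support_iff.mp fun h => Finset.disjoint_left.mp hmn hp (hz h)
    simp only
    rw [Finset.sum_mul_sum, ← Finset.sum_product']
    refine Finset.sum_nbij'
      (fun x => ((x.1.filter (· ∈ m.support), x.2.filter (· ∈ m.support)),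
                 (x.1.filter (· ∉ m.support), x.2.filter (· ∉ m.support))))
      (fun y => (y.1.1 + y.2.1, y.1.2 + y.2.2)) ?_ ?_ ?_ ?_ ?_
    · -- maps into product
      rintro ⟨x, y⟩ hxy
      rw [Finset.HasAntidiagonal.mem_antidiagonal] at hxy
      rw [Finset.mem_product, Finset.HasAntidiagonal.mem_antidiagonal, Finset.HasAntidiagonal.mem_antidiagonal]
      have h1 : (x + y).filter (· ∈ m.support) = m := by
        have := filter_decomp (m.support) m n (subset_rfl) (hzero n subset_rfl)
        rw [hxy]; exact this.1
      have h2 : (x + y).filter (· ∉ m.support) = n := by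
        have := filter_decomp (m.support) m n (subset_rfl) (hzero n subset_rfl)
        rw [hxy]; exact this.2
      constructor
      · rw [← Finsupp.filter_add, h1]
      · rw [← Finsupp.filter_add, h2]
    · rintro ⟨⟨x1, y1⟩, ⟨x2, y2⟩⟩ hy
      rw [Finset.mem_product, Finset.HasAntidiagonal.mem_antidiagonal, Finset.HasAntidiagonal.mem_antidiagonal] at hy
      rw [Finset.HasAntidiagonal.mem_antidiagonal]
      simp only
      rw [add_add_add_comm, hy.1, hy.2]
    · rintro ⟨x, y⟩ _
      simp only [Prod.mk.injEq]
      exact ⟨split_add_rest _ x, split_add_rest _ y⟩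
    · rintro ⟨⟨x1, y1⟩, ⟨x2, y2⟩⟩ hy
      rw [Finset.mem_product, Finset.HasAntidiagonal.mem_antidiagonal, Finset.HasAntidiagonal.mem_antidiagonal] at hy
      simp only [Prod.mk.injEq]
      have d1 := filter_decomp m.support x1 x2 (hsupp m x1 y1 hy.1)
        (hzero x2 (hsupp n x2 y2 hy.2))
      have d2 := filter_decomp m.support y1 y2 (hsupp' m x1 y1 hy.1)
        (hzero y2 (hsupp' n x2 y2 hy.2))
      exact ⟨⟨d1.1, d2.1⟩, ⟨d1.2, d2.2⟩⟩
    · rintro ⟨x, y⟩ _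
      simp only
      have hx : a x = a (x.filter (· ∈ m.support)) * a (x.filter (· ∉ m.support)) := by
        rw [← hA.2 _ _ (disj_filter m.support x x), split_add_rest]
      have hy : b y = b (y.filter (· ∈ m.support)) * b (y.filter (· ∉ m.support)) := by
        rw [← hB.2 _ _ (disj_filter m.support y y), split_add_rest]
      rw [hx, hy]; ring


/-- weighted norm at a prime power, as an extended nonneg real -/
noncomputable def Fe (ω : (P →₀ ℕ) → ℝ) (a : (P →₀ ℕ) → ℂ) (p : P) (i : ℕ) : ℝ≥0∞ :=
  ENNReal.ofReal (‖a (Finsupp.single p i)‖ * ω (Finsupp.single p i))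

lemma Fe_zero {ω : (P →₀ ℕ) → ℝ} {a : (P →₀ ℕ) → ℂ} (hω0 : ω 0 = 1) (ha1 : a 0 = 1)
    (p : P) : Fe ω a p 0 = 1 := by
  simp [Fe, Finsupp.single_zero, hω0, ha1]

lemma Fe_sq_ne_top {ω : (P →₀ ℕ) → ℝ} {a : (P →₀ ℕ) → ℂ}
    (hω1 : ∀ n : P →₀ ℕ, 1 ≤ ω n)
    (h : Summable (fun p : P =>
      ‖a (Finsupp.single p 1)‖ ^ 2 * (ω (Finsupp.single p 1)) ^ 2)) :
    ∑' p : P, (Fe ω a p 1) ^ 2 ≠ ⊤ := by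
  have he : ∀ p : P, (Fe ω a p 1) ^ 2
      = ENNReal.ofReal (‖a (Finsupp.single p 1)‖ ^ 2 * (ω (Finsupp.single p 1)) ^ 2) := by
    intro p
    rw [Fe, ← ENNReal.ofReal_pow
      (mul_nonneg (norm_nonneg _) (zero_le_one.trans (hω1 _))), mul_pow]
  rw [tsum_congr he, ← ENNReal.ofReal_tsum_of_nonneg (fun p => by positivity) h]
  exact ENNReal.ofReal_ne_top

lemma Fe_tail_ne_top {ω : (P →₀ ℕ) → ℝ} {a : (P →₀ ℕ) → ℂ}
    (hω1 : ∀ n : P →₀ ℕ, 1 ≤ ω n)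
    (h : Summable (fun q : P × {k : ℕ // 2 ≤ k} =>
      ‖a (Finsupp.single q.1 (q.2 : ℕ))‖ * ω (Finsupp.single q.1 (q.2 : ℕ)))) :
    ∑' q : P × {k : ℕ // 2 ≤ k}, Fe ω a q.1 (q.2 : ℕ) ≠ ⊤ := by
  rw [show (fun q : P × {k : ℕ // 2 ≤ k} => Fe ω a q.1 (q.2 : ℕ))
    = fun q => ENNReal.ofReal
        (‖a (Finsupp.single q.1 (q.2 : ℕ))‖ * ω (Finsupp.single q.1 (q.2 : ℕ))) from rfl,
    ← ENNReal.ofReal_tsum_of_nonneg (fun q => mul_nonneg (norm_nonneg _) (zero_le_one.trans (hω1 _))) h]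
  exact ENNReal.ofReal_ne_top

lemma Fe_one_le {ω : (P →₀ ℕ) → ℝ} {a : (P →₀ ℕ) → ℂ} (p : P) :
    Fe ω a p 1 ≤ 1 + ∑' p : P, (Fe ω a p 1) ^ 2 := by
  rcases le_total (Fe ω a p 1) 1 with h | h
  · exact h.trans le_self_add
  · refine le_add_left ?_
    calc Fe ω a p 1 ≤ (Fe ω a p 1) ^ 2 := by
          rw [pow_two]; exact le_mul_of_one_le_left zero_le h
      _ ≤ ∑' p : P, (Fe ω a p 1) ^ 2 := ENNReal.le_tsum p

lemma ite_tsum_eq {F : P → ℕ → ℝ≥0∞} :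
    ∑' x : P × ℕ, (if 2 ≤ x.2 then F x.1 x.2 else 0)
      = ∑' q : P × {k : ℕ // 2 ≤ k}, F q.1 (q.2 : ℕ) := by
  symm
  have hinj : Function.Injective (fun q : P × {k : ℕ // 2 ≤ k} => (q.1, (q.2 : ℕ))) := by
    rintro ⟨p, k⟩ ⟨p', k'⟩ h
    simp only [Prod.mk.injEq] at h
    exact Prod.ext h.1 (Subtype.ext h.2)
  have := Function.Injective.tsum_eq (f := fun x : P × ℕ => if 2 ≤ x.2 then F x.1 x.2 else 0)
    hinj ?_
  · rw [← this]
    refine tsum_congr fun q => ?_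
    simp [q.2.2]
  · intro x hx
    simp only [Function.mem_support, ne_eq, ite_eq_right_iff, not_forall] at hx
    exact ⟨(x.1, ⟨x.2, hx.1⟩), rfl⟩

lemma Fe_tsum_j_le {ω : (P →₀ ℕ) → ℝ} {a : (P →₀ ℕ) → ℂ} (hω0 : ω 0 = 1) (ha1 : a 0 = 1)
    (p : P) :
    ∑' j : ℕ, Fe ω a p j
      ≤ 2 + (∑' p : P, (Fe ω a p 1) ^ 2)
          + ∑' q : P × {k : ℕ // 2 ≤ k}, Fe ω a q.1 (q.2 : ℕ) := by
  have split : ∀ j : ℕ, Fe ω a p j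
      = (if j = 0 then Fe ω a p 0 else 0) + (if j = 1 then Fe ω a p 1 else 0)
        + (if 2 ≤ j then Fe ω a p j else 0) := by
    intro j
    rcases j with _ | _ | j <;> simp
  rw [tsum_congr split, ENNReal.tsum_add, ENNReal.tsum_add, tsum_ite_eq, tsum_ite_eq]
  have htail : ∑' j : ℕ, (if 2 ≤ j then Fe ω a p j else 0)
      ≤ ∑' q : P × {k : ℕ // 2 ≤ k}, Fe ω a q.1 (q.2 : ℕ) := by
    have h1 : ∑' j : ℕ, (fun i : ℕ => if 2 ≤ i then Fe ω a p i else 0) (j + 2)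
        = ∑' j : ℕ, (if 2 ≤ j then Fe ω a p j else 0) := by
      refine Function.Injective.tsum_eq (g := fun j : ℕ => j + 2)
        (f := fun i : ℕ => if 2 ≤ i then Fe ω a p i else 0)
        (fun j j' h => by simpa using h) ?_
      intro j hj
      simp only [Function.mem_support, ne_eq, ite_eq_right_iff, not_forall] at hj
      exact ⟨j - 2, Nat.sub_add_cancel hj.1⟩
    rw [← h1]
    have h2 : ∀ j : ℕ, (fun i : ℕ => if 2 ≤ i then Fe ω a p i else 0) (j + 2)
        = (fun q : P × {k : ℕ // 2 ≤ k} => Fe ω a q.1 (q.2 : ℕ))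
            ((fun j : ℕ => ((p, ⟨j + 2, by omega⟩) : P × {k : ℕ // 2 ≤ k})) j) := by
      intro j; simp
    rw [tsum_congr h2]
    exact ENNReal.tsum_comp_le_tsum_of_injective
      (fun j j' h => by simpa using congrArg (fun q => (q.2 : ℕ)) h) _
  calc Fe ω a p 0 + Fe ω a p 1 + ∑' j : ℕ, (if 2 ≤ j then Fe ω a p j else 0)
      ≤ 1 + (1 + ∑' p : P, (Fe ω a p 1) ^ 2)
          + ∑' q : P × {k : ℕ // 2 ≤ k}, Fe ω a q.1 (q.2 : ℕ) := by
        refine add_le_add (add_le_add ?_ (Fe_one_le p)) htail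
        rw [Fe_zero hω0 ha1]
    _ = 2 + (∑' p : P, (Fe ω a p 1) ^ 2)
          + ∑' q : P × {k : ℕ // 2 ≤ k}, Fe ω a q.1 (q.2 : ℕ) := by ring


lemma conv_single_eq (a b : (P →₀ ℕ) → ℂ) (p : P) (k : ℕ) :
    ∑ x ∈ Finset.HasAntidiagonal.antidiagonal (Finsupp.single p k), a x.1 * b x.2
      = ∑ ij ∈ Finset.HasAntidiagonal.antidiagonal k,
          a (Finsupp.single p ij.1) * b (Finsupp.single p ij.2) := by
  rw [Finsupp.antidiagonal_single, Finset.sum_map]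
  rfl

lemma part3 {ω : (P →₀ ℕ) → ℝ} (hω0 : ω 0 = 1)
    (hωsub : ∀ m n : P →₀ ℕ, ω (m + n) ≤ ω m * ω n) (hω1 : ∀ n : P →₀ ℕ, 1 ≤ ω n)
    (a b : (P →₀ ℕ) → ℂ) (hA : MemG ω a) (hB : MemG ω b) :
    Summable (fun q : P × {k : ℕ // 2 ≤ k} =>
      ‖∑ x ∈ Finset.HasAntidiagonal.antidiagonal (Finsupp.single q.1 (q.2 : ℕ)), a x.1 * b x.2‖
        * ω (Finsupp.single q.1 (q.2 : ℕ))) := by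
  classical
  set F := Fe ω a with hF
  set G := Fe ω b with hG
  set S1a := ∑' p : P, (F p 1) ^ 2 with hS1a
  set S2a := ∑' q : P × {k : ℕ // 2 ≤ k}, F q.1 (q.2 : ℕ) with hS2a
  set S1b := ∑' p : P, (G p 1) ^ 2 with hS1b
  set S2b := ∑' q : P × {k : ℕ // 2 ≤ k}, G q.1 (q.2 : ℕ) with hS2b
  have h1a : S1a ≠ ⊤ := Fe_sq_ne_top hω1 hA.2.1
  have h2a : S2a ≠ ⊤ := Fe_tail_ne_top hω1 hA.2.2
  have h1b : S1b ≠ ⊤ := Fe_sq_ne_top hω1 hB.2.1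
  have h2b : S2b ≠ ⊤ := Fe_tail_ne_top hω1 hB.2.2
  set CB : ℝ≥0∞ := 2 + S1b + S2b with hCB
  set CA : ℝ≥0∞ := 2 + S1a with hCA
  set T : P × {k : ℕ // 2 ≤ k} → ℝ≥0∞ := fun q =>
    ENNReal.ofReal (‖∑ x ∈ Finset.HasAntidiagonal.antidiagonal (Finsupp.single q.1 (q.2 : ℕ)),
      a x.1 * b x.2‖ * ω (Finsupp.single q.1 (q.2 : ℕ))) with hT
  -- Step A : termwise domination by a convolution of weighted norms
  have stepA : ∀ q : P × {k : ℕ // 2 ≤ k},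
      T q ≤ ∑ ij ∈ Finset.HasAntidiagonal.antidiagonal (q.2 : ℕ), F q.1 ij.1 * G q.1 ij.2 := by
    rintro ⟨p, k, hk⟩
    have hωnn : ∀ m : P →₀ ℕ, (0:ℝ) ≤ ω m := fun m => zero_le_one.trans (hω1 m)
    simp only [hT]
    rw [conv_single_eq]
    calc ENNReal.ofReal (‖∑ ij ∈ Finset.HasAntidiagonal.antidiagonal k,
            a (Finsupp.single p ij.1) * b (Finsupp.single p ij.2)‖ * ω (Finsupp.single p k))
        ≤ ENNReal.ofReal (∑ ij ∈ Finset.HasAntidiagonal.antidiagonal k,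
            ‖a (Finsupp.single p ij.1) * b (Finsupp.single p ij.2)‖ * ω (Finsupp.single p k)) := by
          apply ENNReal.ofReal_le_ofReal
          rw [← Finset.sum_mul]
          exact mul_le_mul_of_nonneg_right (norm_sum_le _ _) (hωnn _)
      _ = ∑ ij ∈ Finset.HasAntidiagonal.antidiagonal k, ENNReal.ofReal
            (‖a (Finsupp.single p ij.1) * b (Finsupp.single p ij.2)‖ * ω (Finsupp.single p k)) :=
          ENNReal.ofReal_sum_of_nonneg (fun ij _ => mul_nonneg (norm_nonneg _) (hωnn _))
      _ ≤ ∑ ij ∈ Finset.HasAntidiagonal.antidiagonal k, F p ij.1 * G p ij.2 := by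
          apply Finset.sum_le_sum
          intro ij hij
          rw [Finset.HasAntidiagonal.mem_antidiagonal] at hij
          have hsub : ω (Finsupp.single p k) ≤ ω (Finsupp.single p ij.1) * ω (Finsupp.single p ij.2) := by
            rw [← hij, Finsupp.single_add]
            exact hωsub _ _
          have hr : ‖a (Finsupp.single p ij.1) * b (Finsupp.single p ij.2)‖ * ω (Finsupp.single p k)
              ≤ (‖a (Finsupp.single p ij.1)‖ * ω (Finsupp.single p ij.1))
                * (‖b (Finsupp.single p ij.2)‖ * ω (Finsupp.single p ij.2)) := by
            rw [norm_mul]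
            calc ‖a (Finsupp.single p ij.1)‖ * ‖b (Finsupp.single p ij.2)‖ * ω (Finsupp.single p k)
                ≤ ‖a (Finsupp.single p ij.1)‖ * ‖b (Finsupp.single p ij.2)‖
                  * (ω (Finsupp.single p ij.1) * ω (Finsupp.single p ij.2)) :=
                  mul_le_mul_of_nonneg_left hsub (mul_nonneg (norm_nonneg _) (norm_nonneg _))
              _ = _ := by ring
          calc ENNReal.ofReal (‖a (Finsupp.single p ij.1) * b (Finsupp.single p ij.2)‖
                  * ω (Finsupp.single p k))
              ≤ ENNReal.ofReal ((‖a (Finsupp.single p ij.1)‖ * ω (Finsupp.single p ij.1))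
                  * (‖b (Finsupp.single p ij.2)‖ * ω (Finsupp.single p ij.2))) :=
                ENNReal.ofReal_le_ofReal hr
            _ = F p ij.1 * G p ij.2 :=
                ENNReal.ofReal_mul (mul_nonneg (norm_nonneg _) (hωnn _))
  -- the three majorant pieces
  set D1 : P × ℕ × ℕ → ℝ≥0∞ := fun x => (if 2 ≤ x.2.1 then F x.1 x.2.1 else 0) * G x.1 x.2.2
    with hD1
  set D2 : P × ℕ × ℕ → ℝ≥0∞ := fun x =>
    (if x.2.1 ≤ 1 then F x.1 x.2.1 else 0) * (if 2 ≤ x.2.2 then G x.1 x.2.2 else 0) with hD2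
  set D3 : P × ℕ × ℕ → ℝ≥0∞ := fun x =>
    (if x.2.1 = 1 then F x.1 1 else 0) * (if x.2.2 = 1 then G x.1 1 else 0) with hD3
  -- injective flattening of the sigma index
  set Φ : (Σ q : P × {k : ℕ // 2 ≤ k}, ↥(Finset.HasAntidiagonal.antidiagonal (q.2 : ℕ))) → P × ℕ × ℕ :=
    fun σ => (σ.1.1, (σ.2 : ℕ × ℕ).1, (σ.2 : ℕ × ℕ).2) with hΦ
  have hΦinj : Function.Injective Φ := by
    rintro ⟨⟨p, k⟩, ⟨⟨i, j⟩, hij⟩⟩ ⟨⟨p', k'⟩, ⟨⟨i', j'⟩, hij'⟩⟩ h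
    simp only [hΦ, Prod.mk.injEq] at h
    obtain ⟨rfl, rfl, rfl⟩ := h
    rw [Finset.HasAntidiagonal.mem_antidiagonal] at hij hij'
    have hkk : k = k' := Subtype.ext (by rw [← hij, ← hij'])
    subst hkk
    rfl
  have hDbound : ∀ σ : Σ q : P × {k : ℕ // 2 ≤ k}, ↥(Finset.HasAntidiagonal.antidiagonal (q.2 : ℕ)),
      F σ.1.1 (σ.2 : ℕ × ℕ).1 * G σ.1.1 (σ.2 : ℕ × ℕ).2
        ≤ D1 (Φ σ) + D2 (Φ σ) + D3 (Φ σ) := by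
    rintro ⟨⟨p, k, hk⟩, ⟨⟨i, j⟩, hij⟩⟩
    rw [Finset.HasAntidiagonal.mem_antidiagonal] at hij
    have hkij : i + j = k := hij
    simp only [hΦ, hD1, hD2, hD3]
    rcases le_or_gt 2 i with h2 | h2
    · rw [if_pos h2]
      exact le_self_add.trans le_self_add
    · rcases le_or_gt 2 j with h3 | h3
      · rw [if_pos (by omega : i ≤ 1), if_pos h3]
        exact le_add_self.trans le_self_add
      · have hi : i = 1 := by omega
        have hj : j = 1 := by omega
        subst hi; subst hj
        rw [if_pos rfl, if_pos rfl]
        exact le_add_self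
  -- bound the three pieces
  have hsum1 : ∑' x : P × ℕ × ℕ, D1 x ≤ S2a * CB := by
    have hCBb : ∀ p : P, ∑' j : ℕ, G p j ≤ CB := fun p => Fe_tsum_j_le hω0 hB.1.1 p
    rw [ENNReal.tsum_prod']
    calc ∑' (p : P) (y : ℕ × ℕ), D1 (p, y)
        = ∑' (p : P) (i : ℕ) (j : ℕ), (if 2 ≤ i then F p i else 0) * G p j := by
          exact tsum_congr fun p => ENNReal.tsum_prod'
      _ = ∑' (p : P) (i : ℕ), (if 2 ≤ i then F p i else 0) * ∑' j : ℕ, G p j := by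
          exact tsum_congr fun p => tsum_congr fun i => ENNReal.tsum_mul_left
      _ ≤ ∑' (p : P) (i : ℕ), (if 2 ≤ i then F p i else 0) * CB :=
          ENNReal.tsum_le_tsum fun p => ENNReal.tsum_le_tsum fun i =>
            mul_le_mul' le_rfl (hCBb p)
      _ = (∑' (p : P) (i : ℕ), (if 2 ≤ i then F p i else 0)) * CB := by
          rw [← ENNReal.tsum_mul_right]
          exact tsum_congr fun p => ENNReal.tsum_mul_right
      _ = S2a * CB := by
          rw [← ENNReal.tsum_prod' (f := fun x : P × ℕ => if 2 ≤ x.2 then F x.1 x.2 else 0),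
            ite_tsum_eq]
  have hsum2 : ∑' x : P × ℕ × ℕ, D2 x ≤ CA * S2b := by
    have hCAb : ∀ p : P, F p 0 + F p 1 ≤ CA := by
      intro p
      rw [hF, Fe_zero hω0 hA.1.1, hCA]
      calc (1 : ℝ≥0∞) + Fe ω a p 1 ≤ 1 + (1 + S1a) := add_le_add le_rfl (Fe_one_le p)
        _ = 2 + S1a := by ring
    rw [ENNReal.tsum_prod']
    calc ∑' (p : P) (y : ℕ × ℕ), D2 (p, y)
        = ∑' (p : P) (i : ℕ) (j : ℕ),
            (if i ≤ 1 then F p i else 0) * (if 2 ≤ j then G p j else 0) := by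
          exact tsum_congr fun p => ENNReal.tsum_prod'
      _ = ∑' (p : P) (i : ℕ), (if i ≤ 1 then F p i else 0) * ∑' j : ℕ, (if 2 ≤ j then G p j else 0) := by
          exact tsum_congr fun p => tsum_congr fun i => ENNReal.tsum_mul_left
      _ = ∑' p : P, (F p 0 + F p 1) * ∑' j : ℕ, (if 2 ≤ j then G p j else 0) := by
          refine tsum_congr fun p => ?_
          rw [ENNReal.tsum_mul_right]
          congr 1
          rw [tsum_eq_sum (s := ({0, 1} : Finset ℕ)) (by intro b hb; rw [if_neg]; simp at hb; omega)]
          simp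
      _ ≤ ∑' p : P, CA * ∑' j : ℕ, (if 2 ≤ j then G p j else 0) :=
          ENNReal.tsum_le_tsum fun p => mul_le_mul' (hCAb p) le_rfl
      _ = CA * ∑' (p : P) (j : ℕ), (if 2 ≤ j then G p j else 0) := ENNReal.tsum_mul_left
      _ = CA * S2b := by
          rw [← ENNReal.tsum_prod' (f := fun x : P × ℕ => if 2 ≤ x.2 then G x.1 x.2 else 0),
            ite_tsum_eq]
  have hsum3 : ∑' x : P × ℕ × ℕ, D3 x ≤ S1a + S1b := by
    rw [ENNReal.tsum_prod']
    calc ∑' (p : P) (y : ℕ × ℕ), D3 (p, y)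
        = ∑' (p : P) (i : ℕ) (j : ℕ),
            (if i = 1 then F p 1 else 0) * (if j = 1 then G p 1 else 0) := by
          exact tsum_congr fun p => ENNReal.tsum_prod'
      _ = ∑' p : P, F p 1 * G p 1 := by
          refine tsum_congr fun p => ?_
          calc ∑' (i : ℕ) (j : ℕ), (if i = 1 then F p 1 else 0) * (if j = 1 then G p 1 else 0)
              = ∑' i : ℕ, (if i = 1 then F p 1 else 0) * G p 1 := by
                refine tsum_congr fun i => ?_
                rw [ENNReal.tsum_mul_left, tsum_ite_eq]
            _ = F p 1 * G p 1 := by rw [ENNReal.tsum_mul_right, tsum_ite_eq]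
      _ ≤ ∑' p : P, ((F p 1) ^ 2 + (G p 1) ^ 2) := by
          refine ENNReal.tsum_le_tsum fun p => ?_
          rcases le_total (F p 1) (G p 1) with h | h
          · calc F p 1 * G p 1 ≤ G p 1 * G p 1 := mul_le_mul' h le_rfl
              _ = (G p 1) ^ 2 := (pow_two _).symm
              _ ≤ _ := le_add_self
          · calc F p 1 * G p 1 ≤ F p 1 * F p 1 := mul_le_mul' le_rfl h
              _ = (F p 1) ^ 2 := (pow_two _).symm
              _ ≤ _ := le_self_add
      _ = S1a + S1b := ENNReal.tsum_add
  -- total bound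
  have key : ∑' q : P × {k : ℕ // 2 ≤ k}, T q ≠ ⊤ := by
    have hchain : ∑' q : P × {k : ℕ // 2 ≤ k}, T q
        ≤ S2a * CB + CA * S2b + (S1a + S1b) := by
      calc ∑' q : P × {k : ℕ // 2 ≤ k}, T q
          ≤ ∑' q : P × {k : ℕ // 2 ≤ k},
              ∑ ij ∈ Finset.HasAntidiagonal.antidiagonal (q.2 : ℕ), F q.1 ij.1 * G q.1 ij.2 :=
            ENNReal.tsum_le_tsum stepA
        _ = ∑' q : P × {k : ℕ // 2 ≤ k},
              ∑' ij : ↥(Finset.HasAntidiagonal.antidiagonal ((q.2 : ℕ))), F q.1 (ij : ℕ × ℕ).1 * G q.1 (ij : ℕ × ℕ).2 :=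
            tsum_congr fun q =>
              (Finset.tsum_subtype _ (fun ij : ℕ × ℕ => F q.1 ij.1 * G q.1 ij.2)).symm
        _ = ∑' σ : Σ q : P × {k : ℕ // 2 ≤ k}, ↥(Finset.HasAntidiagonal.antidiagonal ((q.2 : ℕ))),
              F σ.1.1 (σ.2 : ℕ × ℕ).1 * G σ.1.1 (σ.2 : ℕ × ℕ).2 :=
            (ENNReal.tsum_sigma' (f := fun σ : Σ q : P × {k : ℕ // 2 ≤ k},
              ↥(Finset.HasAntidiagonal.antidiagonal ((q.2 : ℕ))) =>
              F σ.1.1 (σ.2 : ℕ × ℕ).1 * G σ.1.1 (σ.2 : ℕ × ℕ).2)).symm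
        _ ≤ ∑' σ : Σ q : P × {k : ℕ // 2 ≤ k}, ↥(Finset.HasAntidiagonal.antidiagonal ((q.2 : ℕ))),
              (D1 (Φ σ) + D2 (Φ σ) + D3 (Φ σ)) := ENNReal.tsum_le_tsum hDbound
        _ ≤ ∑' x : P × ℕ × ℕ, (D1 x + D2 x + D3 x) :=
            ENNReal.tsum_comp_le_tsum_of_injective hΦinj _
        _ = (∑' x : P × ℕ × ℕ, D1 x) + (∑' x : P × ℕ × ℕ, D2 x) + ∑' x : P × ℕ × ℕ, D3 x := by
            rw [ENNReal.tsum_add, ENNReal.tsum_add]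
        _ ≤ S2a * CB + CA * S2b + (S1a + S1b) := add_le_add (add_le_add hsum1 hsum2) hsum3
    refine ne_top_of_le_ne_top ?_ hchain
    have hCBne : CB ≠ ⊤ := by
      rw [hCB]
      exact ENNReal.add_ne_top.mpr ⟨ENNReal.add_ne_top.mpr ⟨ENNReal.ofNat_ne_top, h1b⟩, h2b⟩
    have hCAne : CA ≠ ⊤ := by
      rw [hCA]
      exact ENNReal.add_ne_top.mpr ⟨ENNReal.ofNat_ne_top, h1a⟩
    exact ENNReal.add_ne_top.mpr
      ⟨ENNReal.add_ne_top.mpr ⟨ENNReal.mul_ne_top h2a hCBne, ENNReal.mul_ne_top hCAne h2b⟩,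
       ENNReal.add_ne_top.mpr ⟨h1a, h1b⟩⟩
  refine (ENNReal.summable_toReal key).congr fun q => ?_
  rw [hT]
  exact ENNReal.toReal_ofReal (mul_nonneg (norm_nonneg _) (zero_le_one.trans (hω1 _)))

end auxmult

theorem stmt19
    (P : Type*) [DecidableEq P]
    (ω : (P →₀ ℕ) → ℝ) (hω0 : ω 0 = 1)
    (hωsub : ∀ m n : P →₀ ℕ, ω (m + n) ≤ ω m * ω n)
    (hω1 : ∀ n : P →₀ ℕ, 1 ≤ ω n)
    (hωadm : ∀ n : P →₀ ℕ,
      Tendsto (fun k : ℕ => (ω (k • n)) ^ (1 / (k : ℝ))) atTop (nhds 1))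
    (a b : (P →₀ ℕ) → ℂ) (hA : MemG ω a) (hB : MemG ω b) :
    MemG ω (fun n : P →₀ ℕ => ∑ p ∈ Finset.HasAntidiagonal.antidiagonal n, a p.1 * b p.2) := by
  refine ⟨conv_mult a b hA.1 hB.1, ?_, ?_⟩
  · show Summable (fun p : P =>
      ‖∑ x ∈ Finset.HasAntidiagonal.antidiagonal (Finsupp.single p 1), a x.1 * b x.2‖ ^ 2
        * (ω (Finsupp.single p 1)) ^ 2)
    have hone : ∀ p : P,
        ∑ x ∈ Finset.HasAntidiagonal.antidiagonal (Finsupp.single p 1), a x.1 * b x.2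
          = a (Finsupp.single p 1) + b (Finsupp.single p 1) := by
      intro p
      rw [conv_single_eq]
      rw [show (Finset.HasAntidiagonal.antidiagonal 1 : Finset (ℕ × ℕ)) = {(0, 1), (1, 0)} from rfl]
      rw [Finset.sum_pair (by decide)]
      simp [hA.1.1, hB.1.1]
      ring
    refine Summable.of_nonneg_of_le (fun p => by positivity) (fun p => ?_)
      ((hA.2.1.mul_left 2).add (hB.2.1.mul_left 2))
    rw [hone p]
    have hn := norm_add_le (a (Finsupp.single p 1)) (b (Finsupp.single p 1))
    have h2 : ‖a (Finsupp.single p 1) + b (Finsupp.single p 1)‖ ^ 2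
        ≤ 2 * ‖a (Finsupp.single p 1)‖ ^ 2 + 2 * ‖b (Finsupp.single p 1)‖ ^ 2 := by
      nlinarith [norm_nonneg (a (Finsupp.single p 1)), norm_nonneg (b (Finsupp.single p 1)),
        sq_nonneg (‖a (Finsupp.single p 1)‖ - ‖b (Finsupp.single p 1)‖),
        norm_nonneg (a (Finsupp.single p 1) + b (Finsupp.single p 1))]
    calc ‖a (Finsupp.single p 1) + b (Finsupp.single p 1)‖ ^ 2 * (ω (Finsupp.single p 1)) ^ 2
        ≤ (2 * ‖a (Finsupp.single p 1)‖ ^ 2 + 2 * ‖b (Finsupp.single p 1)‖ ^ 2)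
            * (ω (Finsupp.single p 1)) ^ 2 :=
          mul_le_mul_of_nonneg_right h2 (sq_nonneg _)
      _ = 2 * (‖a (Finsupp.single p 1)‖ ^ 2 * (ω (Finsupp.single p 1)) ^ 2)
            + 2 * (‖b (Finsupp.single p 1)‖ ^ 2 * (ω (Finsupp.single p 1)) ^ 2) := by ring
  · show Summable (fun q : P × {k : ℕ // 2 ≤ k} =>
      ‖∑ x ∈ Finset.HasAntidiagonal.antidiagonal (Finsupp.single q.1 (q.2 : ℕ)), a x.1 * b x.2‖
        * ω (Finsupp.single q.1 (q.2 : ℕ)))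
    exact part3 hω0 hωsub hω1 a b hA hB
end
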